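/- Under the extension setup (S a based scheme on Z with closed subset T̃, based morphism i: U → S with iπ: U → S//T̃ an isomorphism, and Condition (*): |t(ui)| = 1 for all u ∈ U and t ∈ T̃), suppose (y₁,y₂) ∈ u ∈ U and z₁ ∈ (y₁i)T̃. Then z₁(ui) ∩ (y₂i)T̃ = z₂T̃''_u for some z₂ ∈ (y₂i)T̃. Moreover, if z₁' ∈ z₁T̃'_u, then z₁'(ui) ∩ (y₂i)T̃ = z₁(ui) ∩ (y₂i)T̃. -/

import Mathlib

/-!
Common framework for association schemes, following the paper
"A new semidirect product for association schemes".
-/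

/-- The diagonal relation `1_X` on a set `X`. -/
def diagRel (X : Type) : Set (X × X) := {w | w.1 = w.2}

/-- The transpose `s*` of a relation. -/
def transp {X : Type} (s : Set (X × X)) : Set (X × X) := Prod.swap '' s

/-- The structure constant `a_{pqr}`: for `(x,y) ∈ r`, the number of `z` with
`(x,z) ∈ p` and `(z,y) ∈ q` (well-defined for elements of a scheme). -/
noncomputable def aC {X : Type} (p q r : Set (X × X)) : ℕ :=
  sSup {n | ∃ w ∈ r, n = Nat.card {z : X // (w.1, z) ∈ p ∧ (z, w.2) ∈ q}}

/-- `S` is an association scheme on `X`. -/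
def IsScheme {X : Type} (S : Set (Set (X × X))) : Prop :=
  (∀ s ∈ S, s.Nonempty) ∧
  (∀ w : X × X, ∃! s, s ∈ S ∧ w ∈ s) ∧
  diagRel X ∈ S ∧
  (∀ s ∈ S, transp s ∈ S) ∧
  (∀ p ∈ S, ∀ q ∈ S, ∀ r ∈ S, ∀ w ∈ r,
    Nat.card {z : X // (w.1, z) ∈ p ∧ (z, w.2) ∈ q} = aC p q r)

/-- Complex product of two relations relative to a scheme `S`:
`pq = {r ∈ S : a_{pqr} > 0}`. -/
noncomputable def cmulS {X : Type} (S : Set (Set (X × X))) (p q : Set (X × X)) :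
    Set (Set (X × X)) :=
  {r | r ∈ S ∧ 0 < aC p q r}

/-- Complex product of two subsets of a scheme. -/
noncomputable def setMulS {X : Type} (S : Set (Set (X × X)))
    (Pp Qq : Set (Set (X × X))) : Set (Set (X × X)) :=
  ⋃ p ∈ Pp, ⋃ q ∈ Qq, cmulS S p q

/-- `T` is a closed subset of the scheme `S` (i.e. `T ⊆ S` and `T*T ⊆ T`). -/
def IsClosedIn {X : Type} (S T : Set (Set (X × X))) : Prop :=
  T ⊆ S ∧ ∀ p ∈ T, ∀ q ∈ T, cmulS S (transp p) q ⊆ T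

/-- `T` is a normal subset of the scheme `S` (i.e. `pT = Tp` for all `p ∈ S`). -/
noncomputable def IsNormalIn {X : Type} (S T : Set (Set (X × X))) : Prop :=
  ∀ p ∈ S, setMulS S {p} T = setMulS S T {p}

/-- `xs = {y : (x,y) ∈ s}`. -/
def pimg {X : Type} (s : Set (X × X)) (x : X) : Set X := {y | (x, y) ∈ s}

/-- The coset `xT` of a (closed) subset `T` of a scheme. -/
def coset {X : Type} (T : Set (Set (X × X))) (x : X) : Set X :=
  {y | ∃ t ∈ T, (x, y) ∈ t}

/-- The set `X/T` of cosets. -/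
def cosets {X : Type} (T : Set (Set (X × X))) : Set (Set X) :=
  {C | ∃ x, C = coset T x}

/-- The quotient relation `s^T` on cosets. -/
def quotRel {X : Type} (T : Set (Set (X × X))) (s : Set (X × X)) :
    Set (Set X × Set X) :=
  {w | ∃ x₁ x₂, w = (coset T x₁, coset T x₂) ∧
    ∃ p ∈ s, p.1 ∈ coset T x₁ ∧ p.2 ∈ coset T x₂}

/-- The relations of the quotient scheme `S//T`. -/
def quotS {X : Type} (S T : Set (Set (X × X))) : Set (Set (Set X × Set X)) :=
  {r | ∃ s ∈ S, r = quotRel T s}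

/-- A presentation of a (based) scheme: a set of points inside an ambient type,
a set of relations, and a basepoint. -/
structure Pres (P : Type) where
  pts : Set P
  rels : Set (Set (P × P))
  base : P

/-- A scheme `S` on the whole of `X`, based at `x0`, as a presentation. -/
def fullPres {X : Type} (S : Set (Set (X × X))) (x0 : X) : Pres X :=
  ⟨Set.univ, S, x0⟩

/-- The quotient scheme `S//T` on `X/T`, based at `x0 T`, as a presentation. -/
def quotPres {X : Type} (S T : Set (Set (X × X))) (x0 : X) : Pres (Set X) :=
  ⟨cosets T, quotS S T, coset T x0⟩

/-- The subscheme of a scheme defined by the coset `xT` of a closed subset `T`,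
as a presentation. -/
def subPres {X : Type} (T : Set (Set (X × X))) (x : X) : Pres X :=
  ⟨coset T x, {r | ∃ t ∈ T, r = t ∩ (coset T x ×ˢ coset T x)}, x⟩

/-- `f` is a morphism of schemes between two presentations: it maps points to
points, and pairs lying in the same relation to pairs lying in the same relation. -/
def IsMorOn {P Q : Type} (A : Pres P) (B : Pres Q) (f : P → Q) : Prop :=
  Set.MapsTo f A.pts B.pts ∧
  ∀ s ∈ A.rels, ∀ w ∈ s, ∀ w' ∈ s,
    ∃ t ∈ B.rels, (f w.1, f w.2) ∈ t ∧ (f w'.1, f w'.2) ∈ t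

/-- The induced map on scheme elements sends `s` to `t` (i.e. `s φ_S = t`):
every pair of `s` is mapped into `t`. -/
def elemMapsTo {P Q : Type} (f : P → Q) (s : Set (P × P)) (t : Set (Q × Q)) : Prop :=
  ∀ w ∈ s, (f w.1, f w.2) ∈ t

/-- `f` is an isomorphism of schemes: a morphism which is bijective on points and
whose induced map on scheme elements is bijective. -/
def IsIsoOn {P Q : Type} (A : Pres P) (B : Pres Q) (f : P → Q) : Prop :=
  IsMorOn A B f ∧ Set.BijOn f A.pts B.pts ∧
  ∀ t ∈ B.rels, ∃! s, s ∈ A.rels ∧ elemMapsTo f s t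

/-- A based isomorphism of schemes. -/
def IsBasedIsoOn {P Q : Type} (A : Pres P) (B : Pres Q) (f : P → Q) : Prop :=
  IsIsoOn A B f ∧ f A.base = B.base

/-- A based association scheme on a finite based set. -/
structure BScheme : Type 1 where
  X : Type
  fin : Fintype X
  base : X
  S : Set (Set (X × X))
  isScheme : IsScheme S

/-- A morphism in the category 𝒞: a normal closed subset on each side together
with a based isomorphism between the corresponding quotient schemes. -/
structure HomC (A B : BScheme) where
  TN : Set (Set (A.X × A.X))
  UN : Set (Set (B.X × B.X))
  TN_cl : IsClosedIn A.S TN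
  TN_n : IsNormalIn A.S TN
  UN_cl : IsClosedIn B.S UN
  UN_n : IsNormalIn B.S UN
  f : Set A.X → Set B.X
  iso : IsBasedIsoOn (quotPres A.S TN A.base) (quotPres B.S UN B.base) f

/-- `t^{T_φ} φ̃ = u^{U_φ}`: the induced map on quotient scheme elements sends
the class of `t` to the class of `u`. -/
def elemRel {A B : BScheme} (φ : HomC A B) (t : Set (A.X × A.X))
    (u : Set (B.X × B.X)) : Prop :=
  elemMapsTo φ.f (quotRel φ.TN t) (quotRel φ.UN u)

/-- The normal closed subset `T_{φψ}` of the composite. -/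
def Tcomp {A B C : BScheme} (φ : HomC A B) (ψ : HomC B C) :
    Set (Set (A.X × A.X)) :=
  {t | t ∈ A.S ∧ ∃ u ∈ B.S, elemRel φ t u ∧ elemRel ψ u (diagRel C.X)}

/-- The normal closed subset `V_{φψ}` of the composite. -/
def Vcomp {A B C : BScheme} (φ : HomC A B) (ψ : HomC B C) :
    Set (Set (C.X × C.X)) :=
  {v | v ∈ C.S ∧ ∃ u ∈ B.S, elemRel φ (diagRel A.X) u ∧ elemRel ψ u v}

/-- `ρ` is a composite of `φ` and `ψ` in the category 𝒞. -/
def IsComposite {A B C : BScheme} (φ : HomC A B) (ψ : HomC B C) (ρ : HomC A C) : Prop :=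
  ρ.TN = Tcomp φ ψ ∧ ρ.UN = Vcomp φ ψ ∧
  ∀ (x : A.X) (y : B.X) (z : C.X),
    φ.f (coset φ.TN x) = coset φ.UN y →
    ψ.f (coset ψ.TN y) = coset ψ.UN z →
    ρ.f (coset (Tcomp φ ψ) x) = coset (Vcomp φ ψ) z

/-- The identity morphism of 𝒞 at `A`: both normal closed subsets are `{1_X}`
and the isomorphism is the identity of `A//{1_X}`. -/
def IsIdHom {A : BScheme} (ι : HomC A A) : Prop :=
  ι.TN = {diagRel A.X} ∧ ι.UN = {diagRel A.X} ∧
  ∀ x : A.X, ι.f (coset {diagRel A.X} x) = coset {diagRel A.X} x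

/-- A `τ_T`-scheme on the based set underlying `T`. -/
structure TauSchemeOn (T : BScheme) where
  rels : Set (Set (T.X × T.X))
  isScheme : IsScheme rels
  alpha : Set (T.X × T.X) → Set (T.X × T.X)
  alpha_bij : Set.BijOn alpha T.S rels
  alpha_one : alpha (diagRel T.X) = diagRel T.X
  alpha_star : ∀ p ∈ T.S, alpha (transp p) = transp (alpha p)
  alpha_const : ∀ p ∈ T.S, ∀ q ∈ T.S, ∀ r ∈ T.S,
    aC p q r = aC (alpha p) (alpha q) (alpha r)

/-- The based scheme underlying a `τ`-scheme. -/
abbrev TauSchemeOn.toB {T : BScheme} (Z : TauSchemeOn T) : BScheme :=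
  ⟨T.X, T.fin, T.base, Z.rels, Z.isScheme⟩

/-- An action `ζ` of a based scheme `U` on a based scheme `T`. -/
structure SchemeAction (U T : BScheme) where
  /-- the `τ`-scheme `ζ_y = (T_y, α^y)` for each `y ∈ Y` -/
  Z : U.X → TauSchemeOn T
  /-- the morphism `ζ_{y₁}^{y₂} ∈ Hom_𝒞(T_{y₁}, T_{y₂})` -/
  hom : ∀ y1 y2 : U.X, HomC (Z y1).toB (Z y2).toB
  /-- (1) `T_{y*} = T` -/
  base_rels : (Z U.base).rels = T.S
  /-- (1) `α^{y*} = id` -/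
  base_alpha : ∀ p, (Z U.base).alpha p = p
  /-- (2) `ζ_y^y` is the identity morphism -/
  hom_refl_TN : ∀ y : U.X, (hom y y).TN = {diagRel T.X}
  hom_refl_UN : ∀ y : U.X, (hom y y).UN = {diagRel T.X}
  hom_refl_f : ∀ (y : U.X) (x : T.X),
    (hom y y).f (coset {diagRel T.X} x) = coset {diagRel T.X} x
  /-- (3) `ζ_{y₂}^{y₁} = (ζ_{y₁}^{y₂})*` -/
  hom_symm_TN : ∀ y1 y2 : U.X, (hom y2 y1).TN = (hom y1 y2).UN
  hom_symm_UN : ∀ y1 y2 : U.X, (hom y2 y1).UN = (hom y1 y2).TN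
  hom_symm_f : ∀ y1 y2 : U.X,
    Set.InvOn (hom y2 y1).f (hom y1 y2).f
      (cosets (hom y1 y2).TN) (cosets (hom y1 y2).UN)
  /-- (4) `ζ_{y₁}^{y₂}(τ)` depends only on the element `u ∈ U` containing `(y₁,y₂)` -/
  zeta_welldef : ∀ u ∈ U.S, ∀ y1 y2 y1' y2' : U.X, (y1, y2) ∈ u → (y1', y2') ∈ u →
    ∀ Pp : Set (Set (T.X × T.X)),
      {u' | u' ∈ T.S ∧ ∃ t ∈ Pp,
        elemRel (hom y1 y2) ((Z y1).alpha t) ((Z y2).alpha u')} =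
      {u' | u' ∈ T.S ∧ ∃ t ∈ Pp,
        elemRel (hom y1' y2') ((Z y1').alpha t) ((Z y2').alpha u')}
  /-- (5) `ζ_{y₁}^{y₃} ≤ ζ_{y₁}^{y₂} ζ_{y₂}^{y₃}` -/
  le_comp : ∀ y1 y2 y3 : U.X,
    (hom y1 y3).TN ⊆ Tcomp (hom y1 y2) (hom y2 y3) ∧
    (hom y1 y3).UN ⊆ Vcomp (hom y1 y2) (hom y2 y3) ∧
    ∀ x x2 x3 : T.X,
      (hom y1 y2).f (coset (hom y1 y2).TN x) = coset (hom y1 y2).UN x2 →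
      (hom y2 y3).f (coset (hom y2 y3).TN x2) = coset (hom y2 y3).UN x3 →
      (hom y1 y3).f (coset (hom y1 y3).TN x) ⊆
        coset (Vcomp (hom y1 y2) (hom y2 y3)) x3

/-- The map `ζ_u` on subsets of `τ` induced by any `(y₁,y₂) ∈ u`. -/
def SchemeAction.zetaU {U T : BScheme} (act : SchemeAction U T)
    (u : Set (U.X × U.X)) (Pp : Set (Set (T.X × T.X))) : Set (Set (T.X × T.X)) :=
  {u' | ∃ y1 y2 : U.X, (y1, y2) ∈ u ∧ u' ∈ T.S ∧
    ∃ t ∈ Pp, elemRel (act.hom y1 y2) ((act.Z y1).alpha t) ((act.Z y2).alpha u')}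

/-- The relation `[u,t]` on `Y × X`. -/
def SchemeAction.rel {U T : BScheme} (act : SchemeAction U T)
    (u : Set (U.X × U.X)) (t : Set (T.X × T.X)) :
    Set ((U.X × T.X) × (U.X × T.X)) :=
  {w | (w.1.1, w.2.1) ∈ u ∧
    ((act.hom w.1.1 w.2.1).f (coset (act.hom w.1.1 w.2.1).TN w.1.2),
      coset (act.hom w.1.1 w.2.1).UN w.2.2) ∈
      quotRel (act.hom w.1.1 w.2.1).UN ((act.Z w.2.1).alpha t)}

/-- The semidirect product `U ⋉_ζ T` as a set of relations on `Y × X`. -/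
def SchemeAction.sdp {U T : BScheme} (act : SchemeAction U T) :
    Set (Set ((U.X × T.X) × (U.X × T.X))) :=
  {r | ∃ u ∈ U.S, ∃ t ∈ T.S, r = act.rel u t}

/-- The valency `n_s = a_{s s* 1}` of a relation. -/
noncomputable def nval {X : Type} (s : Set (X × X)) : ℕ :=
  aC s (transp s) (diagRel X)

section Aux
variable {X : Type}

lemma mem_transp {s : Set (X × X)} {x y : X} : (x, y) ∈ transp s ↔ (y, x) ∈ s := by
  rw [transp, Set.image_swap_eq_preimage_swap]; rfl

lemma transp_transp (s : Set (X × X)) : transp (transp s) = s := by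
  ext ⟨x, y⟩; rw [mem_transp, mem_transp]

variable {S : Set (Set (X × X))}

lemma elt_eq (hS : IsScheme S) {s1 s2 : Set (X × X)} (h1 : s1 ∈ S) (h2 : s2 ∈ S)
    {w : X × X} (hw1 : w ∈ s1) (hw2 : w ∈ s2) : s1 = s2 := by
  obtain ⟨s, _, hu⟩ := hS.2.1 w
  rw [hu s1 ⟨h1, hw1⟩, hu s2 ⟨h2, hw2⟩]

lemma aC_card (hS : IsScheme S) {p q r : Set (X × X)} (hp : p ∈ S) (hq : q ∈ S) (hr : r ∈ S)
    {x y : X} (hxy : (x, y) ∈ r) :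
    Nat.card {z : X // (x, z) ∈ p ∧ (z, y) ∈ q} = aC p q r :=
  hS.2.2.2.2 p hp q hq r hr (x, y) hxy

lemma aC_pos [Finite X] (hS : IsScheme S) {p q r : Set (X × X)} (hp : p ∈ S) (hq : q ∈ S)
    (hr : r ∈ S) {x y z : X} (hxy : (x, y) ∈ r) (h1 : (x, z) ∈ p) (h2 : (z, y) ∈ q) :
    0 < aC p q r := by
  rw [← aC_card hS hp hq hr hxy]
  have : Nonempty {z : X // (x, z) ∈ p ∧ (z, y) ∈ q} := ⟨⟨z, h1, h2⟩⟩
  exact Nat.card_pos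

lemma aC_elim (hS : IsScheme S) {p q r : Set (X × X)} (hp : p ∈ S) (hq : q ∈ S)
    (hr : r ∈ S) (h : 0 < aC p q r) {x y : X} (hxy : (x, y) ∈ r) :
    ∃ z, (x, z) ∈ p ∧ (z, y) ∈ q := by
  rw [← aC_card hS hp hq hr hxy] at h
  obtain ⟨z, hz⟩ := (Nat.card_pos_iff.mp h).1
  exact ⟨z, hz⟩

lemma transp_memS (hS : IsScheme S) {s : Set (X × X)} (hs : s ∈ S) : transp s ∈ S :=
  hS.2.2.2.1 s hs

/-- membership in the complex product from a triangle -/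
lemma mem_cmulS [Finite X] (hS : IsScheme S) {p q r : Set (X × X)} (hp : p ∈ S) (hq : q ∈ S)
    (hr : r ∈ S) {x y z : X} (hxy : (x, y) ∈ r) (h1 : (x, z) ∈ p) (h2 : (z, y) ∈ q) :
    r ∈ cmulS S p q := ⟨hr, aC_pos hS hp hq hr hxy h1 h2⟩

/-- transpose of a complex product membership -/
lemma cmulS_transp [Finite X] (hS : IsScheme S) {p q r : Set (X × X)} (hp : p ∈ S) (hq : q ∈ S)
    (h : r ∈ cmulS S p q) : transp r ∈ cmulS S (transp q) (transp p) := by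
  obtain ⟨hr, hpos⟩ := h
  obtain ⟨⟨x, y⟩, hxy⟩ := hS.1 r hr
  obtain ⟨z, h1, h2⟩ := aC_elim hS hp hq hr hpos hxy
  exact mem_cmulS hS (transp_memS hS hq) (transp_memS hS hp) (transp_memS hS hr)
    (mem_transp.mpr hxy) (mem_transp.mpr h2) (mem_transp.mpr h1)

lemma card_pimg (hS : IsScheme S) {t : Set (X × X)} (ht : t ∈ S) (a : X) :
    Nat.card (pimg t a) = aC t (transp t) (diagRel X) := by
  rw [← aC_card hS ht (transp_memS hS ht) hS.2.2.1 (show (a, a) ∈ diagRel X from rfl)]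
  exact Nat.card_congr (Equiv.subtypeEquivRight fun z =>
    ⟨fun hz => ⟨hz, mem_transp.mpr hz⟩, And.left⟩)

end Aux

section Closed
variable {X : Type} [Finite X] {S T : Set (Set (X × X))}
variable (hS : IsScheme S) (hT : IsClosedIn S T)

include hS hT

lemma diag_memT' (hne : T.Nonempty) : diagRel X ∈ T := by
  obtain ⟨t, ht⟩ := hne
  obtain ⟨⟨x, y⟩, hxy⟩ := hS.1 t (hT.1 ht)
  exact hT.2 t ht t ht (mem_cmulS hS (transp_memS hS (hT.1 ht)) (hT.1 ht)
    hS.2.2.1 (show (y, y) ∈ diagRel X from rfl) (mem_transp.mpr hxy) hxy)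

lemma T_transp {t : Set (X × X)} (ht : t ∈ T) : transp t ∈ T := by
  obtain ⟨⟨x, y⟩, hxy⟩ := hS.1 t (hT.1 ht)
  exact hT.2 t ht (diagRel X) (diag_memT' hS hT ⟨t, ht⟩)
    (mem_cmulS hS (transp_memS hS (hT.1 ht)) hS.2.2.1 (transp_memS hS (hT.1 ht))
      (mem_transp.mpr hxy) (mem_transp.mpr hxy) rfl)

lemma T_mul {t1 t2 : Set (X × X)} (h1 : t1 ∈ T) (h2 : t2 ∈ T) :
    cmulS S t1 t2 ⊆ T := by
  have := hT.2 (transp t1) (T_transp hS hT h1) t2 h2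
  rwa [transp_transp] at this


lemma coset_symm {a b : X} (h : b ∈ coset T a) : a ∈ coset T b := by
  obtain ⟨t, ht, hab⟩ := h
  exact ⟨transp t, T_transp hS hT ht, mem_transp.mpr hab⟩

lemma coset_trans {a b c : X} (hab : b ∈ coset T a) (hbc : c ∈ coset T b) :
    c ∈ coset T a := by
  obtain ⟨t1, ht1, h1⟩ := hab
  obtain ⟨t2, ht2, h2⟩ := hbc
  obtain ⟨e, he, _⟩ := hS.2.1 (a, c)
  exact ⟨e, T_mul hS hT ht1 ht2
    (mem_cmulS hS (hT.1 ht1) (hT.1 ht2) he.1 he.2 h1 h2), he.2⟩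

lemma coset_eq {a b : X} (h : b ∈ coset T a) : coset T b = coset T a := by
  ext c
  constructor
  · exact fun hc => coset_trans hS hT h hc
  · exact fun hc => coset_trans hS hT (coset_symm hS hT h) hc

end Closed

/-- counting a set partitioned by (pairwise disjoint) pieces indexed by a finset -/
lemma ncard_partition {X ι : Type} [Fintype X] (A : Set X) (I : Finset ι) (C : ι → Set X)
    (hcover : ∀ a ∈ A, ∃ i ∈ I, a ∈ C i)
    (hdisj : ∀ i ∈ I, ∀ j ∈ I, i ≠ j → ∀ x, x ∈ C i → x ∉ C j) :
    A.ncard = ∑ i ∈ I, (A ∩ C i).ncard := by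
  classical
  have key : A.toFinite.toFinset = I.biUnion (fun i => (A ∩ C i).toFinite.toFinset) := by
    ext x
    simp only [Set.Finite.mem_toFinset, Finset.mem_biUnion, Set.mem_inter_iff]
    constructor
    · intro hx
      obtain ⟨i, hi, hci⟩ := hcover x hx
      exact ⟨i, hi, hx, hci⟩
    · rintro ⟨i, _, hx, _⟩; exact hx
  rw [Set.ncard_eq_toFinset_card A A.toFinite, key, Finset.card_biUnion]
  · exact Finset.sum_congr rfl fun i _ =>
      (Set.ncard_eq_toFinset_card _ (A ∩ C i).toFinite).symm
  · intro i hi j hj hij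
    rw [Function.onFun, Finset.disjoint_left]
    intro x hx hx'
    rw [Set.Finite.mem_toFinset] at hx hx'
    exact hdisj i hi j hj hij x hx.2 hx'.2


theorem stmt14
    (T U Sch : BScheme) (Tt : Set (Set (Sch.X × Sch.X)))
    (hTt : IsClosedIn Sch.S Tt)
    (hsub : ∃ g : Sch.X → T.X,
      IsBasedIsoOn (subPres Tt Sch.base) (fullPres T.S T.base) g)
    (i : U.X → Sch.X)
    (himor : IsMorOn (fullPres U.S U.base) (fullPres Sch.S Sch.base) i)
    (hibase : i U.base = Sch.base)
    (hipi : IsBasedIsoOn (fullPres U.S U.base) (quotPres Sch.S Tt Sch.base)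
      (fun y => coset Tt (i y)))
    (iS : Set (U.X × U.X) → Set (Sch.X × Sch.X))
    (hiS : ∀ u ∈ U.S, iS u ∈ Sch.S ∧ elemMapsTo i u (iS u))
    (hcond : ∀ u ∈ U.S, ∀ t ∈ Tt, ∃! s, s ∈ cmulS Sch.S t (iS u))
    (u : Set (U.X × U.X)) (hu : u ∈ U.S) (y1 y2 : U.X) (hy : (y1, y2) ∈ u)
    (z1 : Sch.X) (hz1 : z1 ∈ coset Tt (i y1)) :
    (∃ z2 ∈ coset Tt (i y2),
      pimg (iS u) z1 ∩ coset Tt (i y2) =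
        coset {t | t ∈ Tt ∧ cmulS Sch.S (iS u) t = {iS u}} z2) ∧
    ∀ z1' ∈ coset {t | t ∈ Tt ∧ cmulS Sch.S t (iS u) = {iS u}} z1,
      pimg (iS u) z1' ∩ coset Tt (i y2) =
        pimg (iS u) z1 ∩ coset Tt (i y2) := by
  classical
  haveI : Fintype Sch.X := Sch.fin
  haveI : Fintype U.X := U.fin
  haveI : Finite Sch.X := Finite.of_fintype _
  have hSS : IsScheme Sch.S := Sch.isScheme
  have hUS : IsScheme U.S := U.isScheme
  have hui : iS u ∈ Sch.S ∧ elemMapsTo i u (iS u) := hiS u hu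
  -- `Tt` is nonempty, hence contains the diagonal
  have hTtne : Tt.Nonempty := by
    obtain ⟨g, ⟨⟨_, hbij, _⟩, _⟩⟩ := hsub
    obtain ⟨a, ha, -⟩ := hbij.2.2 (Set.mem_univ T.base)
    obtain ⟨t, ht, -⟩ := ha
    exact ⟨t, ht⟩
  have hdiagT : diagRel Sch.X ∈ Tt := diag_memT' hSS hTt hTtne
  have coset_refl : ∀ (R : Set (Set (Sch.X × Sch.X))), diagRel Sch.X ∈ R →
      ∀ a : Sch.X, a ∈ coset R a := fun R hR a => ⟨diagRel Sch.X, hR, rfl⟩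
  -- the transpose of `u` maps to the transpose of `iS u`
  have hu' : transp u ∈ U.S := hUS.2.2.2.1 u hu
  have iS_transp : iS (transp u) = transp (iS u) := by
    have h1 := hiS (transp u) hu'
    exact elt_eq hSS h1.1 (transp_memS hSS hui.1)
      (h1.2 (y2, y1) (mem_transp.mpr hy)) (mem_transp.mpr (hui.2 (y1, y2) hy))
  -- products `(iS u) e` with `e ∈ Tt` containing `iS u` are the singleton `{iS u}`
  have right_single : ∀ e ∈ Tt, iS u ∈ cmulS Sch.S (iS u) e →
      cmulS Sch.S (iS u) e = {iS u} := by
    intro e he hmem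
    ext r
    simp only [Set.mem_singleton_iff]
    constructor
    · intro hr
      have h1 := cmulS_transp hSS hui.1 (hTt.1 he) hr
      have h2 := cmulS_transp hSS hui.1 (hTt.1 he) hmem
      rw [← iS_transp] at h1 h2
      obtain ⟨s0, -, hs0u⟩ := hcond (transp u) hu' (transp e) (T_transp hSS hTt he)
      have e1 := hs0u _ h1
      have e2 := hs0u _ h2
      have hchain : transp r = transp (iS u) := by
        rw [e1.trans e2.symm, iS_transp]
      rw [← transp_transp r, hchain, transp_transp]
    · rintro rfl; exact hmem
  -- the set `T''_u`
  set Tpp : Set (Set (Sch.X × Sch.X)) :=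
    {t | t ∈ Tt ∧ cmulS Sch.S (iS u) t = {iS u}} with hTppdef
  have hdiagTpp : diagRel Sch.X ∈ Tpp := by
    refine ⟨hdiagT, right_single _ hdiagT ?_⟩
    exact mem_cmulS hSS hui.1 (hTt.1 hdiagT) hui.1 (hui.2 (y1, y2) hy)
      (hui.2 (y1, y2) hy) rfl
  -- Fact C: a nonempty piece is a `Tpp`-coset
  have piece_eq : ∀ x c z2 : Sch.X, (x, z2) ∈ iS u → z2 ∈ coset Tt c →
      pimg (iS u) x ∩ coset Tt c = coset Tpp z2 := by
    intro x c z2 hxz2 hz2c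
    ext v
    constructor
    · rintro ⟨hv1, hv2⟩
      have hvz2 : v ∈ coset Tt z2 :=
        coset_trans hSS hTt (coset_symm hSS hTt hz2c) hv2
      obtain ⟨t', ht', hz2v⟩ := hvz2
      refine ⟨t', ⟨ht', right_single t' ht' ?_⟩, hz2v⟩
      exact mem_cmulS hSS hui.1 (hTt.1 ht') hui.1 hv1 hxz2 hz2v
    · rintro ⟨t', ⟨ht', hsing⟩, hz2w⟩
      constructor
      · obtain ⟨m, ⟨hmS, hmM⟩, -⟩ := hSS.2.1 (x, v)
        have hm : m ∈ cmulS Sch.S (iS u) t' :=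
          mem_cmulS hSS hui.1 (hTt.1 ht') hmS hmM hxz2 hz2w
        rw [hsing, Set.mem_singleton_iff] at hm
        rw [← hm]; exact hmM
      · exact coset_trans hSS hTt hz2c ⟨t', ht', hz2w⟩
  -- all `Tpp`-cosets have the same size
  have cardTpp : ∀ a : Sch.X, (coset Tpp a).ncard =
      ∑ t ∈ (Set.toFinite Tpp).toFinset, aC t (transp t) (diagRel Sch.X) := by
    intro a
    have hpart := ncard_partition (coset Tpp a) (Set.toFinite Tpp).toFinset
      (fun t => pimg t a)
      (by
        rintro w ⟨t, ht, hw⟩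
        exact ⟨t, (Set.Finite.mem_toFinset _).mpr ht, hw⟩)
      (by
        intro t1 ht1 t2 ht2 hne x hx1 hx2
        rw [Set.Finite.mem_toFinset] at ht1 ht2
        exact hne (elt_eq hSS (hTt.1 ht1.1) (hTt.1 ht2.1) hx1 hx2))
    rw [hpart]
    refine Finset.sum_congr rfl fun t ht => ?_
    rw [Set.Finite.mem_toFinset] at ht
    have : coset Tpp a ∩ pimg t a = pimg t a :=
      Set.inter_eq_self_of_subset_right (fun w hw => ⟨t, ht, hw⟩)
    rw [this, ← Nat.card_coe_set_eq, card_pimg hSS (hTt.1 ht.1) a]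
  -- transfer lemma for quotient relations
  have Qtrans : ∀ s r : Set (Sch.X × Sch.X), s ∈ Sch.S → r ∈ Sch.S →
      ∀ a b c d : Sch.X, (a, b) ∈ s → (c, d) ∈ s →
      (∃ e f, (e, f) ∈ r ∧ e ∈ coset Tt a ∧ f ∈ coset Tt b) →
      (∃ e f, (e, f) ∈ r ∧ e ∈ coset Tt c ∧ f ∈ coset Tt d) := by
    rintro s r hsS hrS a b c d hab hcd ⟨e, f, hef, ⟨t1, ht1, hae⟩, ⟨t2, ht2, hbf⟩⟩
    obtain ⟨m, ⟨hmS, hmM⟩, -⟩ := hSS.2.1 (a, f)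
    have hm : 0 < aC t1 r m := aC_pos hSS (hTt.1 ht1) hrS hmS hmM hae hef
    have hs : 0 < aC m (transp t2) s :=
      aC_pos hSS hmS (transp_memS hSS (hTt.1 ht2)) hsS hab hmM (mem_transp.mpr hbf)
    obtain ⟨f', hcf', hf'd⟩ :=
      aC_elim hSS hmS (transp_memS hSS (hTt.1 ht2)) hsS hs hcd
    obtain ⟨e', hce', he'f'⟩ := aC_elim hSS (hTt.1 ht1) hrS hmS hm hcf'
    exact ⟨e', f', he'f', ⟨t1, ht1, hce'⟩, ⟨t2, ht2, mem_transp.mp hf'd⟩⟩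
  -- every `iS u`-neighbour of a point of `(i y1)Tt` lies in some `(i y3)Tt` with
  -- `(y1, y3) ∈ u`
  have nbr_coset : ∀ x w : Sch.X, x ∈ coset Tt (i y1) → (x, w) ∈ iS u →
      ∃ y3, (y1, y3) ∈ u ∧ w ∈ coset Tt (i y3) := by
    intro x w hx hxw
    obtain ⟨⟨hmor, hbij, hrels⟩, -⟩ := hipi
    obtain ⟨y3, -, hy3⟩ := hbij.2.2 (show coset Tt w ∈ cosets Tt from ⟨w, rfl⟩)
    obtain ⟨u3, ⟨hu3, hy13⟩, -⟩ := hUS.2.1 (y1, y3)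
    have hwy3 : w ∈ coset Tt (i y3) := by
      have : coset Tt (i y3) = coset Tt w := hy3
      rw [this]; exact coset_refl Tt hdiagT w
    have hqR : quotRel Tt (iS u) ∈ (quotPres Sch.S Tt Sch.base).rels :=
      ⟨iS u, hui.1, rfl⟩
    have hmapu : elemMapsTo (fun y => coset Tt (i y)) u (quotRel Tt (iS u)) := by
      intro p hp
      exact ⟨i p.1, i p.2, rfl, (i p.1, i p.2), hui.2 p hp,
        coset_refl Tt hdiagT _, coset_refl Tt hdiagT _⟩
    have hmapu3 : elemMapsTo (fun y => coset Tt (i y)) u3 (quotRel Tt (iS u)) := by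
      intro p hp
      obtain ⟨e', f', hef, he', hf'⟩ := Qtrans (iS u3) (iS u) (hiS u3 hu3).1 hui.1
        (i y1) (i y3) (i p.1) (i p.2) ((hiS u3 hu3).2 (y1, y3) hy13)
        ((hiS u3 hu3).2 p hp) ⟨x, w, hxw, hx, hwy3⟩
      exact ⟨i p.1, i p.2, rfl, (e', f'), hef, he', hf'⟩
    obtain ⟨s0, -, hs0⟩ := hrels (quotRel Tt (iS u)) hqR
    have e1 := hs0 u ⟨hu, hmapu⟩
    have e2 := hs0 u3 ⟨hu3, hmapu3⟩
    refine ⟨y3, ?_, hwy3⟩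
    rw [e2.trans e1.symm] at hy13
    exact hy13
  -- distinct `y`'s give disjoint cosets
  have inj_coset : ∀ ya yb : U.X, ya ≠ yb → ∀ x : Sch.X,
      x ∈ coset Tt (i ya) → x ∉ coset Tt (i yb) := by
    intro ya yb hne x hxa hxb
    obtain ⟨⟨-, hbij, -⟩, -⟩ := hipi
    apply hne
    apply hbij.2.1 (Set.mem_univ ya) (Set.mem_univ yb)
    show coset Tt (i ya) = coset Tt (i yb)
    rw [← coset_eq hSS hTt hxa, ← coset_eq hSS hTt hxb]
  -- the partition count
  have hpart : ∀ x : Sch.X, x ∈ coset Tt (i y1) →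
      (pimg (iS u) x).ncard =
        ∑ y ∈ (Set.toFinite (pimg u y1)).toFinset,
          (pimg (iS u) x ∩ coset Tt (i y)).ncard := by
    intro x hx
    refine ncard_partition _ _ _ ?_ ?_
    · intro w hw
      obtain ⟨y3, hy3u, hwy3⟩ := nbr_coset x w hx hw
      exact ⟨y3, (Set.Finite.mem_toFinset _).mpr hy3u, hwy3⟩
    · intro ya _ yb _ hne
      exact inj_coset ya yb hne
  have hiy1 : (i y1 : Sch.X) ∈ coset Tt (i y1) := coset_refl Tt hdiagT _
  set KK : ℕ := ∑ t ∈ (Set.toFinite Tpp).toFinset, aC t (transp t) (diagRel Sch.X)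
    with hKK
  have hKKpos : 0 < KK := by
    have h1 : (coset Tpp (i y1)).ncard = KK := cardTpp (i y1)
    have h2 : (coset Tpp (i y1)).Nonempty := ⟨i y1, coset_refl Tpp hdiagTpp _⟩
    rw [← h1]
    exact (Set.ncard_pos (Set.toFinite _)).mpr h2
  -- base point: all pieces are full
  have hbase_piece : ∀ y ∈ (Set.toFinite (pimg u y1)).toFinset,
      (pimg (iS u) (i y1) ∩ coset Tt (i y)).ncard = KK := by
    intro y hyu
    rw [Set.Finite.mem_toFinset] at hyu
    rw [piece_eq (i y1) (i y) (i y) (hui.2 (y1, y) hyu) (coset_refl Tt hdiagT _)]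
    exact cardTpp (i y)
  -- the piece of `z1` at `y2` is nonempty
  have hcard_eq : (pimg (iS u) z1).ncard = (pimg (iS u) (i y1)).ncard := by
    rw [← Nat.card_coe_set_eq, ← Nat.card_coe_set_eq,
      card_pimg hSS hui.1 z1, card_pimg hSS hui.1 (i y1)]
  have hy2mem : y2 ∈ (Set.toFinite (pimg u y1)).toFinset :=
    (Set.Finite.mem_toFinset _).mpr hy
  have hne_piece : (pimg (iS u) z1 ∩ coset Tt (i y2)).Nonempty := by
    by_contra hemp
    rw [Set.not_nonempty_iff_eq_empty] at hemp
    have hlt : ∑ y ∈ (Set.toFinite (pimg u y1)).toFinset,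
        (pimg (iS u) z1 ∩ coset Tt (i y)).ncard <
        ∑ y ∈ (Set.toFinite (pimg u y1)).toFinset, KK := by
      refine Finset.sum_lt_sum (fun y hyu => ?_) ⟨y2, hy2mem, ?_⟩
      · rcases Set.eq_empty_or_nonempty (pimg (iS u) z1 ∩ coset Tt (i y)) with h | h
        · rw [h]; simp
        · obtain ⟨v, hv⟩ := h
          rw [piece_eq z1 (i y) v hv.1 hv.2]
          rw [cardTpp v]
      · rw [hemp]; simpa using hKKpos
    rw [← hpart z1 hz1] at hlt
    rw [hcard_eq, hpart (i y1) hiy1] at hlt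
    rw [Finset.sum_congr rfl hbase_piece] at hlt
    exact lt_irrefl _ hlt
  constructor
  · obtain ⟨z2, hz2⟩ := hne_piece
    exact ⟨z2, hz2.2, piece_eq z1 (i y2) z2 hz2.1 hz2.2⟩
  · -- part 2: invariance
    rintro z1' ⟨t, ⟨ht, hts⟩, hz1t⟩
    -- `transp t` also satisfies `t* (iS u) = {iS u}`
    have hts' : cmulS Sch.S (transp t) (iS u) = {iS u} := by
      obtain ⟨s0, -, hs0u⟩ := hcond u hu (transp t) (T_transp hSS hTt ht)
      have hmem : iS u ∈ cmulS Sch.S t (iS u) := by rw [hts]; rfl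
      obtain ⟨⟨a, b⟩, hab⟩ := hSS.1 (iS u) hui.1
      obtain ⟨z, hz, hzb⟩ := aC_elim hSS (hTt.1 ht) hui.1 hui.1 hmem.2 hab
      have hmem' : iS u ∈ cmulS Sch.S (transp t) (iS u) :=
        mem_cmulS hSS (transp_memS hSS (hTt.1 ht)) hui.1 hui.1 hzb
          (mem_transp.mpr hz) hab
      ext r
      simp only [Set.mem_singleton_iff]
      constructor
      · intro hr
        exact (hs0u r hr).trans (hs0u (iS u) hmem').symm
      · rintro rfl; exact hmem'
    ext w
    simp only [Set.mem_inter_iff, pimg, Set.mem_setOf_eq]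
    constructor
    · rintro ⟨hw1, hw2⟩
      refine ⟨?_, hw2⟩
      obtain ⟨m, ⟨hmS, hmM⟩, -⟩ := hSS.2.1 (z1, w)
      have : m ∈ cmulS Sch.S t (iS u) :=
        mem_cmulS hSS (hTt.1 ht) hui.1 hmS hmM hz1t hw1
      rw [hts, Set.mem_singleton_iff] at this
      rw [← this]; exact hmM
    · rintro ⟨hw1, hw2⟩
      refine ⟨?_, hw2⟩
      obtain ⟨m, ⟨hmS, hmM⟩, -⟩ := hSS.2.1 (z1', w)
      have : m ∈ cmulS Sch.S (transp t) (iS u) :=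
        mem_cmulS hSS (transp_memS hSS (hTt.1 ht)) hui.1 hmS hmM
          (mem_transp.mpr hz1t) hw1
      rw [hts', Set.mem_singleton_iff] at this
      rw [← this]; exact hmM
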